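/- Let $h > 0$ and let $v$ be a Schwartz function on $\mathbb{R}^2$. Define the semiclassical Fourier transform $\hat{v}(\xi,\eta) = \iint_{\mathbb{R}^2} e^{-i(x\xi + y\eta)/h}\, v(x,y)\, dx\, dy$ and set $u(t,x,y) = (2\pi h)^{-2}\,\mathrm{sech}\, t \iint_{\mathbb{R}^2} \exp\big(\tfrac{i}{h}[(xy - \xi\eta)\tanh t + (x\xi + y\eta)\,\mathrm{sech}\, t]\big)\, \hat{v}(\xi,\eta)\, d\xi\, d\eta$. Then $u$ solves the evolution equation exactly: for all $(t,x,y) \in \mathbb{R}^3$, $\frac{h}{i}\,\partial_t u(t,x,y) - h^2\, \partial_x \partial_y u(t,x,y) - x y\, u(t,x,y) = 0$, and $u(0,x,y) = v(x,y)$. -/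

import Mathlib

noncomputable section

open MeasureTheory

/-- The semiclassical Fourier transform of `v`, `v̂(ξ,η) = ∬ e^{-i(xξ+yη)/h} v(x,y) dx dy`. -/
def scFourier (h : ℝ) (v : SchwartzMap (ℝ × ℝ) ℂ) (w : ℝ × ℝ) : ℂ :=
  ∫ q : ℝ × ℝ, Complex.exp (-(Complex.I / (h : ℂ)) * ((q.1 : ℂ) * (w.1 : ℂ) + (q.2 : ℂ) * (w.2 : ℂ))) * v q

/-- The FIO solution
`u(t,x,y) = (2πh)⁻² sech t ∬ exp((i/h)[(xy-ξη)tanh t + (xξ+yη)sech t]) v̂(ξ,η) dξ dη`. -/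
def fioSolution (h : ℝ) (v : SchwartzMap (ℝ × ℝ) ℂ) (t x y : ℝ) : ℂ :=
  (((2 * Real.pi * h) ^ 2)⁻¹ : ℝ) * ((Real.cosh t)⁻¹ : ℝ) *
    ∫ w : ℝ × ℝ, Complex.exp ((Complex.I / (h : ℂ)) *
      ((((x * y : ℝ) : ℂ) - (w.1 : ℂ) * (w.2 : ℂ)) * (Real.tanh t : ℂ) +
        (((x : ℂ) * (w.1 : ℂ) + (y : ℂ) * (w.2 : ℂ))) * (((Real.cosh t)⁻¹ : ℝ) : ℂ))) *
      scFourier h v w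


open Real FourierTransform Complex

abbrev E2 := EuclideanSpace ℝ (Fin 2)

def prodE2 : (ℝ × ℝ) ≃L[ℝ] E2 :=
  (ContinuousLinearEquiv.finTwoArrow ℝ ℝ).symm.trans (EuclideanSpace.equiv (Fin 2) ℝ).symm

lemma prodE2_apply (p : ℝ × ℝ) : prodE2 p = (WithLp.equiv 2 (Fin 2 → ℝ)).symm ![p.1, p.2] := rfl

lemma inner_prodE2 (p q : ℝ × ℝ) :
    @inner ℝ _ _ (prodE2 p) (prodE2 q) = p.1 * q.1 + p.2 * q.2 := by
  simp [prodE2_apply, PiLp.inner_apply, Fin.sum_univ_two, RCLike.inner_apply]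
  ring

lemma mp_prodE2 : MeasurePreserving (⇑prodE2) volume volume := by
  have h1 := (EuclideanSpace.volume_preserving_symm_measurableEquiv_toLp (Fin 2)).symm
  have h2 := (volume_preserving_finTwoArrow ℝ).symm
  have := h1.comp h2
  convert this using 1
  · rfl
  · funext p
    ext i
    fin_cases i <;> rfl

variable (h : ℝ) (v : SchwartzMap (ℝ × ℝ) ℂ)

/-- the scaling-composition map `p ↦ (2πh)⁻¹ • prodE2 p` -/
def gmap (p : ℝ × ℝ) : E2 := (2 * π * h)⁻¹ • prodE2 p

lemma gmap_temperate : Function.HasTemperateGrowth (gmap h) := by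
  have : gmap h = ⇑((2 * π * h)⁻¹ • (prodE2 : (ℝ×ℝ) ≃L[ℝ] E2).toContinuousLinearMap) := by
    funext p; simp [gmap]
  rw [this]
  exact ContinuousLinearMap.hasTemperateGrowth _

lemma gmap_antilip (hh : 0 < h) :
    ∃ K : NNReal, AntilipschitzWith K (gmap h) := by
  have hc : (2 * π * h)⁻¹ ≠ 0 := by positivity
  set L : E2 →L[ℝ] (ℝ × ℝ) :=
    (prodE2.symm.toContinuousLinearMap.comp ((2 * π * h) • ContinuousLinearMap.id ℝ E2)) with hL
  refine ⟨‖L‖₊, L.lipschitz.to_rightInverse ?_⟩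
  intro p
  show prodE2.symm ((2 * π * h) • ((2 * π * h)⁻¹ • prodE2 p)) = p
  rw [smul_smul, mul_inv_cancel₀ (by positivity : (2*π*h) ≠ 0), one_smul,
    ContinuousLinearEquiv.symm_apply_apply]

/-- `v` transported to `E2`. -/
def vE2 : SchwartzMap E2 ℂ := SchwartzMap.compCLMOfContinuousLinearEquiv ℝ prodE2.symm v

/-- the Schwartz representative of `scFourier h v`. -/
def Fsch (hh : 0 < h) : SchwartzMap (ℝ × ℝ) ℂ :=
  SchwartzMap.compCLMOfAntilipschitz ℝ (gmap_temperate h) (gmap_antilip h hh).choose_spec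
    (SchwartzMap.fourierTransformCLM ℂ (vE2 v))

lemma Fsch_apply (hh : 0 < h) (w : ℝ × ℝ) :
    Fsch h v hh w = 𝓕 (⇑(vE2 v)) ((2 * π * h)⁻¹ • prodE2 w) := by
  simp [Fsch, gmap, SchwartzMap.fourierTransformCLM_apply, SchwartzMap.fourier_coe]

lemma scFourier_eq (hh : 0 < h) (w : ℝ × ℝ) :
    scFourier h v w = Fsch h v hh w := by
  rw [Fsch_apply, Real.fourier_eq']
  rw [← mp_prodE2.integral_comp (prodE2.toHomeomorph.measurableEmbedding) _]
  unfold scFourier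
  congr 1; funext p
  rw [real_inner_smul_right, inner_prodE2]
  have hv : (vE2 v) (prodE2 p) = v p := by
    simp [vE2]
  rw [smul_eq_mul, hv]
  congr 2
  have hπ : (π:ℂ) ≠ 0 := Complex.ofReal_ne_zero.mpr Real.pi_ne_zero
  have hhc : (h:ℂ) ≠ 0 := Complex.ofReal_ne_zero.mpr hh.ne'
  push_cast
  field_simp

lemma key_inversion (hh : 0 < h) (x y : ℝ) :
    ∫ w : ℝ × ℝ, Complex.exp ((Complex.I / (h:ℂ)) * ((x:ℂ) * (w.1:ℂ) + (y:ℂ) * (w.2:ℂ)))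
      * Fsch h v hh w = (((2 * π * h) ^ 2 : ℝ) : ℂ) * v (x, y) := by
  have hπ : (0:ℝ) < 2 * π * h := by positivity
  set W : SchwartzMap E2 ℂ := SchwartzMap.fourierTransformCLM ℂ (vE2 v) with hW
  set P : E2 := prodE2 (x, y) with hP
  set R : ℝ := (2 * π * h)⁻¹ with hR
  set f : E2 → ℂ := fun r => Complex.exp ((↑(2 * π * @inner ℝ _ _ r P) * Complex.I)) * W r with hf
  have step1 : ∀ w : ℝ × ℝ,
      Complex.exp ((Complex.I / (h:ℂ)) * ((x:ℂ) * (w.1:ℂ) + (y:ℂ) * (w.2:ℂ))) * Fsch h v hh w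
        = f (R • prodE2 w) := by
    intro w
    have hW' : Fsch h v hh w = W (R • prodE2 w) := Fsch_apply h v hh w
    rw [hW', hf]
    congr 2
    rw [real_inner_smul_left, inner_prodE2]
    have hsc : (2 * π * (R * (w.1 * (x, y).1 + w.2 * (x, y).2)) : ℝ) = (x * w.1 + y * w.2) / h := by
      rw [hR]; field_simp
    rw [hsc]
    push_cast
    ring
  simp_rw [step1]
  have step2 : ∫ w : ℝ × ℝ, f (R • prodE2 w) = ∫ q : E2, f (R • q) :=
    mp_prodE2.integral_comp (prodE2.toHomeomorph.measurableEmbedding) (fun q => f (R • q))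
  rw [step2]
  rw [MeasureTheory.Measure.integral_comp_smul volume f R]
  have hrank : Module.finrank ℝ E2 = 2 := by simp [E2]
  rw [hrank, hR]
  have step3 : ∫ r : E2, f r = (vE2 v) P := by
    have hinv := ((vE2 v).continuous.fourierInv_fourier_eq (vE2 v).integrable
      (W.integrable))
    have : 𝓕⁻ (𝓕 ⇑(vE2 v)) P = (vE2 v) P := by rw [hinv]
    rw [← this, Real.fourierInv_eq']
    congr 1
  rw [step3]
  have hvP : (vE2 v) P = v (x, y) := by simp [vE2, hP]
  rw [hvP]
  have : |(((2 * π * h)⁻¹ ^ 2)⁻¹)| = ((2 * π * h) ^ 2 : ℝ) := by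
    rw [abs_of_pos (by positivity)]
    field_simp
  rw [this, Complex.real_smul]

def ph (t x y : ℝ) (w : ℝ × ℝ) : ℝ :=
  (x * y - w.1 * w.2) * Real.tanh t + (x * w.1 + y * w.2) * (Real.cosh t)⁻¹

def K (h t x y : ℝ) (w : ℝ × ℝ) : ℂ := Complex.exp (Complex.I / (h:ℂ) * ((ph t x y w : ℝ) : ℂ))

lemma norm_K {h : ℝ} (hh : 0 < h) (t x y : ℝ) (w : ℝ × ℝ) : ‖K h t x y w‖ = 1 := by
  rw [K, show (Complex.I / (h:ℂ)) * ((ph t x y w : ℝ):ℂ) = ((ph t x y w / h : ℝ):ℂ) * Complex.I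
    by push_cast; ring]
  exact Complex.norm_exp_ofReal_mul_I _

lemma hasDerivAt_sech (t : ℝ) :
    HasDerivAt (fun s => (Real.cosh s)⁻¹) (-(Real.tanh t * (Real.cosh t)⁻¹)) t := by
  have h1 := (Real.hasDerivAt_cosh t).inv (Real.cosh_pos t).ne'
  refine h1.congr_deriv ?_
  rw [Real.tanh_eq_sinh_div_cosh]
  ring

lemma hasDerivAt_tanh' (t : ℝ) :
    HasDerivAt Real.tanh (((Real.cosh t)⁻¹) ^ 2) t := by
  have h1 := (Real.hasDerivAt_sinh t).div (Real.hasDerivAt_cosh t) (Real.cosh_pos t).ne'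
  have h2 : (fun s => Real.sinh s / Real.cosh s) = Real.tanh := by
    funext s; rw [Real.tanh_eq_sinh_div_cosh]
  have h1 : HasDerivAt (fun s => Real.sinh s / Real.cosh s) _ t := h1
  rw [h2] at h1
  convert h1 using 1
  have hid := Real.cosh_sq_sub_sinh_sq t
  have hc := (Real.cosh_pos t).ne'
  field_simp
  nlinarith [hid]

lemma sech_le_one (t : ℝ) : (Real.cosh t)⁻¹ ≤ 1 := by
  rw [inv_le_one_iff₀]
  right; exact Real.one_le_cosh t

lemma sech_pos (t : ℝ) : 0 < (Real.cosh t)⁻¹ := inv_pos.mpr (Real.cosh_pos t)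

lemma abs_tanh_le_one (t : ℝ) : |Real.tanh t| ≤ 1 := by
  have hc := Real.cosh_pos t
  rw [Real.tanh_eq_sinh_div_cosh, abs_div, abs_of_pos hc, div_le_one hc, abs_le]
  have e1 := Real.exp_pos t
  have e2 := Real.exp_pos (-t)
  rw [Real.cosh_eq, Real.sinh_eq]
  constructor <;> nlinarith

lemma tanh_sq_add_sech_sq (t : ℝ) : Real.tanh t ^ 2 + ((Real.cosh t)⁻¹) ^ 2 = 1 := by
  have hid := Real.cosh_sq_sub_sinh_sq t
  have hc := (Real.cosh_pos t).ne'
  rw [Real.tanh_eq_sinh_div_cosh]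
  field_simp
  nlinarith [hid]

lemma hasDerivAt_ph_x (t x y : ℝ) (w : ℝ × ℝ) :
    HasDerivAt (fun a => ph t a y w) (y * Real.tanh t + w.1 * (Real.cosh t)⁻¹) x := by
  have h1 : (fun a => ph t a y w) = fun a =>
      a * (y * Real.tanh t + w.1 * (Real.cosh t)⁻¹)
        + (-(w.1 * w.2) * Real.tanh t + y * w.2 * (Real.cosh t)⁻¹) := by
    funext a; unfold ph; ring
  rw [h1]
  simpa using ((hasDerivAt_id x).mul_const (y * Real.tanh t + w.1 * (Real.cosh t)⁻¹)).add_const (-(w.1 * w.2) * Real.tanh t + y * w.2 * (Real.cosh t)⁻¹)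

lemma hasDerivAt_ph_y (t x y : ℝ) (w : ℝ × ℝ) :
    HasDerivAt (fun b => ph t x b w) (x * Real.tanh t + w.2 * (Real.cosh t)⁻¹) y := by
  have h1 : (fun b => ph t x b w) = fun b =>
      b * (x * Real.tanh t + w.2 * (Real.cosh t)⁻¹)
        + (-(w.1 * w.2) * Real.tanh t + x * w.1 * (Real.cosh t)⁻¹) := by
    funext b; unfold ph; ring
  rw [h1]
  simpa using ((hasDerivAt_id y).mul_const (x * Real.tanh t + w.2 * (Real.cosh t)⁻¹)).add_const (-(w.1 * w.2) * Real.tanh t + x * w.1 * (Real.cosh t)⁻¹)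

lemma hasDerivAt_ph_t (t x y : ℝ) (w : ℝ × ℝ) :
    HasDerivAt (fun s => ph s x y w)
      ((x*y - w.1*w.2) * ((Real.cosh t)⁻¹)^2
        - (x*w.1 + y*w.2) * (Real.tanh t * (Real.cosh t)⁻¹)) t := by
  have h1 := ((hasDerivAt_tanh' t).const_mul (x*y - w.1*w.2)).add
    ((hasDerivAt_sech t).const_mul (x*w.1 + y*w.2))
  refine h1.congr_deriv ?_
  ring

lemma hasDerivAt_K_x (h t x y : ℝ) (w : ℝ × ℝ) :
    HasDerivAt (fun a => K h t a y w)
      (Complex.I / (h:ℂ) * (((y * Real.tanh t + w.1 * (Real.cosh t)⁻¹ : ℝ)) : ℂ) * K h t x y w)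
      x := by
  have h1 := (((hasDerivAt_ph_x t x y w).ofReal_comp).const_mul (Complex.I / (h:ℂ))).cexp
  refine h1.congr_deriv ?_
  rw [K]; ring

lemma hasDerivAt_K_y (h t x y : ℝ) (w : ℝ × ℝ) :
    HasDerivAt (fun b => K h t x b w)
      (Complex.I / (h:ℂ) * (((x * Real.tanh t + w.2 * (Real.cosh t)⁻¹ : ℝ)) : ℂ) * K h t x y w)
      y := by
  have h1 := (((hasDerivAt_ph_y t x y w).ofReal_comp).const_mul (Complex.I / (h:ℂ))).cexp
  refine h1.congr_deriv ?_
  rw [K]; ring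

lemma hasDerivAt_K_t (h t x y : ℝ) (w : ℝ × ℝ) :
    HasDerivAt (fun s => K h s x y w)
      (Complex.I / (h:ℂ) * (((x*y - w.1*w.2) * ((Real.cosh t)⁻¹)^2
        - (x*w.1 + y*w.2) * (Real.tanh t * (Real.cosh t)⁻¹) : ℝ) : ℂ) * K h t x y w) t := by
  have h1 := (((hasDerivAt_ph_t t x y w).ofReal_comp).const_mul (Complex.I / (h:ℂ))).cexp
  refine h1.congr_deriv ?_
  rw [K]; ring

lemma continuous_K (h t x y : ℝ) : Continuous (fun w : ℝ × ℝ => K h t x y w) := by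
  unfold K ph
  fun_prop


lemma int_KF (h t x y : ℝ) {hh : 0 < h} (G : SchwartzMap (ℝ × ℝ) ℂ) :
    Integrable (fun w : ℝ × ℝ => K h t x y w * G w) := by
  refine (G.integrable.bdd_mul (c := 1) (continuous_K h t x y).aestronglyMeasurable (Filter.Eventually.of_forall fun w => ?_))
  rw [norm_K hh]

lemma int_pow_mul (G : SchwartzMap (ℝ × ℝ) ℂ) (k : ℕ) :
    Integrable (fun w : ℝ × ℝ => ‖w‖ ^ k * ‖G w‖) := G.integrable_pow_mul volume k

/-- derivative in the second spatial variable -/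
lemma hasDerivAt_int_y (h t a b : ℝ) (hh : 0 < h) (G : SchwartzMap (ℝ × ℝ) ℂ) :
    Integrable (fun w : ℝ × ℝ =>
      (Complex.I / (h:ℂ) * (((a * Real.tanh t + w.2 * (Real.cosh t)⁻¹ : ℝ)) : ℂ))
        * K h t a b w * G w) ∧
    HasDerivAt (fun b' => ∫ w : ℝ × ℝ, K h t a b' w * G w)
      (∫ w : ℝ × ℝ, (Complex.I / (h:ℂ) * (((a * Real.tanh t + w.2 * (Real.cosh t)⁻¹ : ℝ)) : ℂ))
        * K h t a b w * G w) b := by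
  have main := hasDerivAt_integral_of_dominated_loc_of_deriv_le (μ := volume)
    (F := fun (b' : ℝ) (w : ℝ × ℝ) => K h t a b' w * G w)
    (F' := fun (b' : ℝ) (w : ℝ × ℝ) =>
      (Complex.I / (h:ℂ) * (((a * Real.tanh t + w.2 * (Real.cosh t)⁻¹ : ℝ)) : ℂ))
        * K h t a b' w * G w)
    (x₀ := b)
    (bound := fun w => h⁻¹ * (|a| + ‖w‖) * ‖G w‖)
    (Metric.ball_mem_nhds _ one_pos)
    (Filter.Eventually.of_forall fun b' =>
      (((continuous_K h t a b').mul G.continuous).aestronglyMeasurable))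
    (int_KF h t a b (hh := hh) G)
    (by
      apply Continuous.aestronglyMeasurable
      have hc : Continuous (fun w : ℝ × ℝ =>
          (Complex.I / (h:ℂ) * (((a * Real.tanh t + w.2 * (Real.cosh t)⁻¹ : ℝ)) : ℂ))) := by
        fun_prop
      exact (hc.mul (continuous_K h t a b)).mul G.continuous)
    (Filter.Eventually.of_forall fun w => by
      intro b' _
      have hKn := norm_K hh t a b' w
      rw [norm_mul, norm_mul, hKn, mul_one, norm_mul]
      have h1 : ‖Complex.I / (h:ℂ)‖ = h⁻¹ := by
        rw [norm_div, Complex.norm_I, Complex.norm_real, Real.norm_eq_abs,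
          abs_of_pos hh, one_div]
      rw [h1, Complex.norm_real, Real.norm_eq_abs]
      have h2 : |a * Real.tanh t + w.2 * (Real.cosh t)⁻¹| ≤ |a| + ‖w‖ := by
        have := abs_tanh_le_one t
        have hs := sech_le_one t
        have hsp := sech_pos t
        have hw2 : |w.2| ≤ ‖w‖ := by
          rw [← Real.norm_eq_abs]; exact norm_snd_le w
        calc |a * Real.tanh t + w.2 * (Real.cosh t)⁻¹|
            ≤ |a * Real.tanh t| + |w.2 * (Real.cosh t)⁻¹| := abs_add_le _ _
          _ ≤ |a| + ‖w‖ := by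
              rw [abs_mul, abs_mul]
              have g1 : |a| * |Real.tanh t| ≤ |a| := by
                nlinarith [abs_nonneg a]
              have g2 : |w.2| * |(Real.cosh t)⁻¹| ≤ ‖w‖ := by
                rw [abs_of_pos hsp]
                nlinarith [abs_nonneg w.2, norm_nonneg w]
              linarith
      exact mul_le_mul_of_nonneg_right
        (mul_le_mul_of_nonneg_left h2 (by positivity)) (norm_nonneg _))
    (by
      have : (fun w : ℝ × ℝ => h⁻¹ * (|a| + ‖w‖) * ‖G w‖)
          = fun w => (h⁻¹ * |a|) * (‖w‖ ^ 0 * ‖G w‖) + h⁻¹ * (‖w‖ ^ 1 * ‖G w‖) := by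
        funext w; ring
      rw [this]
      exact ((int_pow_mul G 0).const_mul _).add ((int_pow_mul G 1).const_mul _))
    (Filter.Eventually.of_forall fun w => by
      intro b' _
      exact (hasDerivAt_K_y h t a b' w).mul_const (G w))
  exact main

lemma norm_Ic {h : ℝ} (hh : 0 < h) (r : ℝ) :
    ‖Complex.I / (h:ℂ) * ((r:ℝ):ℂ)‖ = h⁻¹ * |r| := by
  rw [norm_mul, norm_div, Complex.norm_I, Complex.norm_real, Complex.norm_real,
    Real.norm_eq_abs, Real.norm_eq_abs, abs_of_pos hh, one_div]

lemma abs_lin_le (t c z : ℝ) : |c * Real.tanh t + z * (Real.cosh t)⁻¹| ≤ |c| + |z| := by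
  have h1 := abs_tanh_le_one t
  have h2 := sech_le_one t
  have h3 := sech_pos t
  calc |c * Real.tanh t + z * (Real.cosh t)⁻¹|
      ≤ |c * Real.tanh t| + |z * (Real.cosh t)⁻¹| := abs_add_le _ _
    _ ≤ |c| + |z| := by
        rw [abs_mul, abs_mul, abs_of_pos h3]
        have g1 : |c| * |Real.tanh t| ≤ |c| * 1 := by
          apply mul_le_mul_of_nonneg_left h1 (abs_nonneg c)
        have g2 : |z| * (Real.cosh t)⁻¹ ≤ |z| * 1 := by
          apply mul_le_mul_of_nonneg_left h2 (abs_nonneg z)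
        simp only [mul_one] at g1 g2
        linarith

lemma abs_Dt_le (s x y : ℝ) (w : ℝ × ℝ) :
    |(x*y - w.1*w.2) * ((Real.cosh s)⁻¹)^2 - (x*w.1 + y*w.2) * (Real.tanh s * (Real.cosh s)⁻¹)|
      ≤ (|x| * |y| + ‖w‖^2) + (|x| + |y|) * ‖w‖ := by
  have h1 := abs_tanh_le_one s
  have h2 := sech_le_one s
  have h3 := sech_pos s
  have hw1 : |w.1| ≤ ‖w‖ := by rw [← Real.norm_eq_abs]; exact norm_fst_le w
  have hw2 : |w.2| ≤ ‖w‖ := by rw [← Real.norm_eq_abs]; exact norm_snd_le w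
  have hwn : (0:ℝ) ≤ ‖w‖ := norm_nonneg w
  have e1 : |((Real.cosh s)⁻¹)^2| ≤ 1 := by
    rw [abs_of_pos (by positivity)]
    nlinarith
  have e2 : |Real.tanh s * (Real.cosh s)⁻¹| ≤ 1 := by
    rw [abs_mul, abs_of_pos h3]
    nlinarith [abs_nonneg (Real.tanh s)]
  calc |(x*y - w.1*w.2) * ((Real.cosh s)⁻¹)^2 - (x*w.1 + y*w.2) * (Real.tanh s * (Real.cosh s)⁻¹)|
      ≤ |(x*y - w.1*w.2) * ((Real.cosh s)⁻¹)^2| + |(x*w.1 + y*w.2) * (Real.tanh s * (Real.cosh s)⁻¹)| :=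
        abs_sub _ _
    _ ≤ |x*y - w.1*w.2| + |x*w.1 + y*w.2| := by
        rw [abs_mul, abs_mul]
        have := abs_nonneg (x*y - w.1*w.2)
        have := abs_nonneg (x*w.1 + y*w.2)
        nlinarith
    _ ≤ (|x| * |y| + ‖w‖^2) + (|x| + |y|) * ‖w‖ := by
        have g1 : |x*y - w.1*w.2| ≤ |x| * |y| + ‖w‖^2 := by
          calc |x*y - w.1*w.2| ≤ |x*y| + |w.1*w.2| := abs_sub _ _
            _ ≤ |x| * |y| + ‖w‖^2 := by
                rw [abs_mul, abs_mul]
                nlinarith [abs_nonneg w.1, abs_nonneg w.2]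
        have g2 : |x*w.1 + y*w.2| ≤ (|x| + |y|) * ‖w‖ := by
          calc |x*w.1 + y*w.2| ≤ |x*w.1| + |y*w.2| := abs_add_le _ _
            _ ≤ (|x| + |y|) * ‖w‖ := by
                rw [abs_mul, abs_mul]
                nlinarith [abs_nonneg x, abs_nonneg y]
        linarith

lemma int_mul_of_poly_bound {h : ℝ} (hh : 0 < h) (G : SchwartzMap (ℝ × ℝ) ℂ)
    (f : ℝ × ℝ → ℂ) (hf : Continuous f) (c0 c1 c2 : ℝ)
    (hb : ∀ w : ℝ × ℝ, ‖f w‖ ≤ c0 + c1 * ‖w‖ + c2 * ‖w‖^2) :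
    Integrable (fun w : ℝ × ℝ => f w * G w) := by
  have hint : Integrable (fun w : ℝ × ℝ => (c0 + c1 * ‖w‖ + c2 * ‖w‖^2) * ‖G w‖) := by
    have heq : (fun w : ℝ × ℝ => (c0 + c1 * ‖w‖ + c2 * ‖w‖^2) * ‖G w‖)
        = fun w => c0 * (‖w‖^0 * ‖G w‖) + c1 * (‖w‖^1 * ‖G w‖) + c2 * (‖w‖^2 * ‖G w‖) := by
      funext w; ring
    rw [heq]
    exact (((int_pow_mul G 0).const_mul _).add ((int_pow_mul G 1).const_mul _)).add
      ((int_pow_mul G 2).const_mul _)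
  refine hint.mono' ((hf.mul G.continuous).aestronglyMeasurable)
    (Filter.Eventually.of_forall fun w => ?_)
  rw [norm_mul]
  exact mul_le_mul_of_nonneg_right (hb w) (norm_nonneg _)

/-- derivative in the first spatial variable of the once-differentiated integral -/
lemma hasDerivAt_int_x (h t x y : ℝ) (hh : 0 < h) (G : SchwartzMap (ℝ × ℝ) ℂ) :
    Integrable (fun w : ℝ × ℝ =>
      (Complex.I / (h:ℂ) * ((Real.tanh t : ℝ) : ℂ) * K h t x y w
        + Complex.I / (h:ℂ) * (((x * Real.tanh t + w.2 * (Real.cosh t)⁻¹ : ℝ)) : ℂ)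
          * (Complex.I / (h:ℂ) * (((y * Real.tanh t + w.1 * (Real.cosh t)⁻¹ : ℝ)) : ℂ)
            * K h t x y w)) * G w) ∧
    HasDerivAt (fun a => ∫ w : ℝ × ℝ,
        (Complex.I / (h:ℂ) * (((a * Real.tanh t + w.2 * (Real.cosh t)⁻¹ : ℝ)) : ℂ))
          * K h t a y w * G w)
      (∫ w : ℝ × ℝ,
        (Complex.I / (h:ℂ) * ((Real.tanh t : ℝ) : ℂ) * K h t x y w
          + Complex.I / (h:ℂ) * (((x * Real.tanh t + w.2 * (Real.cosh t)⁻¹ : ℝ)) : ℂ)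
            * (Complex.I / (h:ℂ) * (((y * Real.tanh t + w.1 * (Real.cosh t)⁻¹ : ℝ)) : ℂ)
              * K h t x y w)) * G w) x := by
  have main := hasDerivAt_integral_of_dominated_loc_of_deriv_le (μ := volume)
    (F := fun (a : ℝ) (w : ℝ × ℝ) =>
      (Complex.I / (h:ℂ) * (((a * Real.tanh t + w.2 * (Real.cosh t)⁻¹ : ℝ)) : ℂ))
        * K h t a y w * G w)
    (F' := fun (a : ℝ) (w : ℝ × ℝ) =>
      (Complex.I / (h:ℂ) * ((Real.tanh t : ℝ) : ℂ) * K h t a y w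
        + Complex.I / (h:ℂ) * (((a * Real.tanh t + w.2 * (Real.cosh t)⁻¹ : ℝ)) : ℂ)
          * (Complex.I / (h:ℂ) * (((y * Real.tanh t + w.1 * (Real.cosh t)⁻¹ : ℝ)) : ℂ)
            * K h t a y w)) * G w)
    (x₀ := x)
    (bound := fun w => (h⁻¹ + (h⁻¹ * ((|x| + 1) + ‖w‖)) * (h⁻¹ * (|y| + ‖w‖))) * ‖G w‖)
    (Metric.ball_mem_nhds _ one_pos)
    (Filter.Eventually.of_forall fun a =>
      Continuous.aestronglyMeasurable (by
        exact ((by fun_prop : Continuous (fun w : ℝ × ℝ =>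
          (Complex.I / (h:ℂ) * (((a * Real.tanh t + w.2 * (Real.cosh t)⁻¹ : ℝ)) : ℂ)))).mul
          (continuous_K h t a y)).mul G.continuous))
    (by
      have := int_mul_of_poly_bound hh G
        (fun w : ℝ × ℝ =>
          (Complex.I / (h:ℂ) * (((x * Real.tanh t + w.2 * (Real.cosh t)⁻¹ : ℝ)) : ℂ))
            * K h t x y w)
        (by
          exact (by fun_prop : Continuous (fun w : ℝ × ℝ =>
            (Complex.I / (h:ℂ) * (((x * Real.tanh t + w.2 * (Real.cosh t)⁻¹ : ℝ)) : ℂ)))).mul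
            (continuous_K h t x y))
        (h⁻¹ * |x|) (h⁻¹) 0
        (fun w => by
          rw [norm_mul, norm_K hh, mul_one, norm_Ic hh]
          have h2 : |x * Real.tanh t + w.2 * (Real.cosh t)⁻¹| ≤ |x| + ‖w‖ := by
            refine le_trans (abs_lin_le t x w.2) ?_
            have hw2 : |w.2| ≤ ‖w‖ := by rw [← Real.norm_eq_abs]; exact norm_snd_le w
            linarith
          have hhi : (0:ℝ) < h⁻¹ := inv_pos.mpr hh
          nlinarith [norm_nonneg w])
      simpa using this)
    (Continuous.aestronglyMeasurable (by
      refine Continuous.mul ?_ G.continuous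
      refine Continuous.add ?_ ?_
      · exact Continuous.mul (by fun_prop) (continuous_K h t x y)
      · exact Continuous.mul (by fun_prop)
          (Continuous.mul (by fun_prop) (continuous_K h t x y))))
    (Filter.Eventually.of_forall fun w => by
      intro a ha
      have hax : |a| ≤ |x| + 1 := by
        have habs : |a - x| < 1 := by
          have := Metric.mem_ball.mp ha
          rwa [Real.dist_eq] at this
        calc |a| = |(a - x) + x| := by ring_nf
          _ ≤ |a - x| + |x| := abs_add_le _ _
          _ ≤ |x| + 1 := by linarith
      have hw1 : |w.1| ≤ ‖w‖ := by rw [← Real.norm_eq_abs]; exact norm_fst_le w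
      have hw2 : |w.2| ≤ ‖w‖ := by rw [← Real.norm_eq_abs]; exact norm_snd_le w
      have hhi : (0:ℝ) < h⁻¹ := inv_pos.mpr hh
      have hwn : (0:ℝ) ≤ ‖w‖ := norm_nonneg w
      rw [norm_mul]
      have hA : ‖Complex.I / (h:ℂ) * ((Real.tanh t : ℝ) : ℂ) * K h t a y w‖ ≤ h⁻¹ := by
        rw [norm_mul, norm_K hh, mul_one, norm_Ic hh]
        nlinarith [abs_tanh_le_one t]
      have hB : ‖Complex.I / (h:ℂ) * (((a * Real.tanh t + w.2 * (Real.cosh t)⁻¹ : ℝ)) : ℂ)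
          * (Complex.I / (h:ℂ) * (((y * Real.tanh t + w.1 * (Real.cosh t)⁻¹ : ℝ)) : ℂ)
            * K h t a y w)‖
          ≤ (h⁻¹ * ((|x| + 1) + ‖w‖)) * (h⁻¹ * (|y| + ‖w‖)) := by
        rw [norm_mul, norm_Ic hh, norm_mul, norm_K hh, mul_one, norm_Ic hh]
        have h2 : |a * Real.tanh t + w.2 * (Real.cosh t)⁻¹| ≤ (|x| + 1) + ‖w‖ :=
          le_trans (abs_lin_le t a w.2) (by linarith)
        have h3 : |y * Real.tanh t + w.1 * (Real.cosh t)⁻¹| ≤ |y| + ‖w‖ :=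
          le_trans (abs_lin_le t y w.1) (by linarith)
        have hhi : (0:ℝ) < h⁻¹ := inv_pos.mpr hh
        exact mul_le_mul (mul_le_mul_of_nonneg_left h2 hhi.le)
          (mul_le_mul_of_nonneg_left h3 hhi.le) (by positivity) (by positivity)
      refine mul_le_mul_of_nonneg_right (le_trans (norm_add_le _ _) ?_) (norm_nonneg _)
      linarith)
    (by
      have heq : (fun w : ℝ × ℝ =>
          (h⁻¹ + (h⁻¹ * ((|x| + 1) + ‖w‖)) * (h⁻¹ * (|y| + ‖w‖))) * ‖G w‖)
          = fun w => (h⁻¹ + h⁻¹ * h⁻¹ * ((|x| + 1) * |y|)) * (‖w‖^0 * ‖G w‖)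
            + (h⁻¹ * h⁻¹ * ((|x| + 1) + |y|)) * (‖w‖^1 * ‖G w‖)
            + (h⁻¹ * h⁻¹) * (‖w‖^2 * ‖G w‖) := by
        funext w; ring
      rw [heq]
      exact (((int_pow_mul G 0).const_mul _).add ((int_pow_mul G 1).const_mul _)).add
        ((int_pow_mul G 2).const_mul _))
    (Filter.Eventually.of_forall fun w => by
      intro a _
      have hlin : HasDerivAt (fun a' : ℝ =>
          a' * Real.tanh t + w.2 * (Real.cosh t)⁻¹) (Real.tanh t) a := by
        simpa using ((hasDerivAt_id a).mul_const (Real.tanh t)).add_const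
          (w.2 * (Real.cosh t)⁻¹)
      have hc : HasDerivAt (fun a' : ℝ =>
          Complex.I / (h:ℂ) * (((a' * Real.tanh t + w.2 * (Real.cosh t)⁻¹ : ℝ)) : ℂ))
          (Complex.I / (h:ℂ) * ((Real.tanh t : ℝ) : ℂ)) a := by
        exact (hlin.ofReal_comp).const_mul _
      exact (hc.mul (hasDerivAt_K_x h t a y w)).mul_const (G w))
  exact main

/-- derivative in time of the integral -/
lemma hasDerivAt_int_t (h t x y : ℝ) (hh : 0 < h) (G : SchwartzMap (ℝ × ℝ) ℂ) :
    Integrable (fun w : ℝ × ℝ =>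
      Complex.I / (h:ℂ) * (((x*y - w.1*w.2) * ((Real.cosh t)⁻¹)^2
        - (x*w.1 + y*w.2) * (Real.tanh t * (Real.cosh t)⁻¹) : ℝ) : ℂ) * K h t x y w * G w) ∧
    HasDerivAt (fun s => ∫ w : ℝ × ℝ, K h s x y w * G w)
      (∫ w : ℝ × ℝ,
        Complex.I / (h:ℂ) * (((x*y - w.1*w.2) * ((Real.cosh t)⁻¹)^2
          - (x*w.1 + y*w.2) * (Real.tanh t * (Real.cosh t)⁻¹) : ℝ) : ℂ) * K h t x y w * G w)
      t := by
  have main := hasDerivAt_integral_of_dominated_loc_of_deriv_le (μ := volume)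
    (F := fun (s : ℝ) (w : ℝ × ℝ) => K h s x y w * G w)
    (F' := fun (s : ℝ) (w : ℝ × ℝ) =>
      Complex.I / (h:ℂ) * (((x*y - w.1*w.2) * ((Real.cosh s)⁻¹)^2
        - (x*w.1 + y*w.2) * (Real.tanh s * (Real.cosh s)⁻¹) : ℝ) : ℂ) * K h s x y w * G w)
    (x₀ := t)
    (bound := fun w => h⁻¹ * ((|x| * |y| + ‖w‖^2) + (|x| + |y|) * ‖w‖) * ‖G w‖)
    (Metric.ball_mem_nhds _ one_pos)
    (Filter.Eventually.of_forall fun s =>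
      (((continuous_K h s x y).mul G.continuous).aestronglyMeasurable))
    (int_KF h t x y (hh := hh) G)
    (Continuous.aestronglyMeasurable (by
      refine Continuous.mul (Continuous.mul ?_ (continuous_K h t x y)) G.continuous
      fun_prop))
    (Filter.Eventually.of_forall fun w => by
      intro s _
      rw [norm_mul, norm_mul, norm_K hh, mul_one, norm_Ic hh]
      refine mul_le_mul_of_nonneg_right
        (mul_le_mul_of_nonneg_left (abs_Dt_le s x y w) (by positivity)) (norm_nonneg _))
    (by
      have heq : (fun w : ℝ × ℝ =>
          h⁻¹ * ((|x| * |y| + ‖w‖^2) + (|x| + |y|) * ‖w‖) * ‖G w‖)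
          = fun w => (h⁻¹ * (|x| * |y|)) * (‖w‖^0 * ‖G w‖)
            + (h⁻¹ * (|x| + |y|)) * (‖w‖^1 * ‖G w‖) + h⁻¹ * (‖w‖^2 * ‖G w‖) := by
        funext w; ring
      rw [heq]
      exact (((int_pow_mul G 0).const_mul _).add ((int_pow_mul G 1).const_mul _)).add
        ((int_pow_mul G 2).const_mul _))
    (Filter.Eventually.of_forall fun w => by
      intro s _
      exact (hasDerivAt_K_t h s x y w).mul_const (G w))
  exact main

lemma fio_eq (h : ℝ) (hh : 0 < h) (v : SchwartzMap (ℝ × ℝ) ℂ) (t x y : ℝ) :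
    fioSolution h v t x y
      = ((((2 * π * h) ^ 2)⁻¹ : ℝ) : ℂ) * (((Real.cosh t)⁻¹ : ℝ) : ℂ)
        * ∫ w : ℝ × ℝ, K h t x y w * Fsch h v hh w := by
  unfold fioSolution
  congr 1
  refine integral_congr_ae (Filter.Eventually.of_forall fun w => ?_)
  beta_reduce
  rw [scFourier_eq h v hh w]
  congr 1
  rw [K]
  congr 1
  push_cast [ph]
  ring

lemma fio_init (h : ℝ) (hh : 0 < h) (v : SchwartzMap (ℝ × ℝ) ℂ) (x y : ℝ) :
    fioSolution h v 0 x y = v (x, y) := by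
  rw [fio_eq h hh v 0 x y]
  have hK0 : ∀ w : ℝ × ℝ, K h 0 x y w
      = Complex.exp ((Complex.I / (h:ℂ)) * ((x:ℂ) * (w.1:ℂ) + (y:ℂ) * (w.2:ℂ))) := by
    intro w
    rw [K]
    congr 1
    push_cast [ph]
    simp [Real.tanh_zero, Real.cosh_zero]
  have : (∫ w : ℝ × ℝ, K h 0 x y w * Fsch h v hh w)
      = ∫ w : ℝ × ℝ, Complex.exp ((Complex.I / (h:ℂ)) * ((x:ℂ) * (w.1:ℂ) + (y:ℂ) * (w.2:ℂ)))
          * Fsch h v hh w := by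
    refine integral_congr_ae (Filter.Eventually.of_forall fun w => ?_)
    beta_reduce
    rw [hK0 w]
  rw [this, key_inversion h v hh x y]
  have hne : ((2 * π * h) ^ 2 : ℝ) ≠ 0 := by positivity
  rw [Real.cosh_zero, inv_one, Complex.ofReal_one, mul_one,
    ← mul_assoc, ← Complex.ofReal_mul, inv_mul_cancel₀ hne, Complex.ofReal_one, one_mul]

lemma scalar_final (η σ τ J0 PDt xc yc c0 : ℂ) (hη : η ≠ 0) :
    η / Complex.I * (c0 * (-(τ * σ) * J0 + σ * (Complex.I / η * PDt)))
      - η^2 * (c0 * σ * ((Complex.I / η * τ) * J0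
          + (Complex.I / η * (Complex.I / η)) * (xc * yc * J0 - PDt)))
      - xc * yc * (c0 * σ * J0) = 0 := by
  have hI := Complex.I_ne_zero
  field_simp
  linear_combination (-(c0*σ*η*τ*J0) - c0*σ*J0*Complex.I*xc*yc + c0*σ*PDt*Complex.I) * Complex.I_sq


/-- The Fourier integral operator ansatz with phase `(xy-ξη)tanh t + (xξ+yη)sech t` and
amplitude `sech t` solves the evolution equation `(h/i)∂ₜu - h²∂ₓ∂_y u - xy·u = 0`
exactly, with initial condition `u(0,·,·) = v`. -/
theorem fioSolution_solves_evolution_equation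
    (h : ℝ) (hh : 0 < h) (v : SchwartzMap (ℝ × ℝ) ℂ) (t x y : ℝ) :
    ((h : ℂ) / Complex.I) * deriv (fun s => fioSolution h v s x y) t -
      (h : ℂ) ^ 2 * deriv (fun a => deriv (fun b => fioSolution h v t a b) y) x -
      ((x * y : ℝ) : ℂ) * fioSolution h v t x y = 0 ∧
    fioSolution h v 0 x y = v (x, y) := by
  refine ⟨?_, fio_init h hh v x y⟩
  have hhc : (h:ℂ) ≠ 0 := Complex.ofReal_ne_zero.mpr hh.ne'
  have hIne := Complex.I_ne_zero
  -- t derivative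
  obtain ⟨intT, hAt⟩ := hasDerivAt_int_t h t x y hh (Fsch h v hh)
  have hfun1 : (fun s => fioSolution h v s x y)
      = fun s => ((((2 * π * h) ^ 2)⁻¹ : ℝ) : ℂ)
          * ((((Real.cosh s)⁻¹ : ℝ) : ℂ) * ∫ w : ℝ × ℝ, K h s x y w * Fsch h v hh w) := by
    funext s
    rw [fio_eq h hh v s x y, mul_assoc]
  have hDtderiv := (((hasDerivAt_sech t).ofReal_comp.mul hAt).const_mul
    ((((2 * π * h) ^ 2)⁻¹ : ℝ) : ℂ)).deriv
  -- inner y derivative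
  have hfun2 : (fun a => deriv (fun b => fioSolution h v t a b) y)
      = fun a => (((((2 * π * h) ^ 2)⁻¹ : ℝ) : ℂ) * (((Real.cosh t)⁻¹ : ℝ) : ℂ))
          * ∫ w : ℝ × ℝ,
            (Complex.I / (h:ℂ) * (((a * Real.tanh t + w.2 * (Real.cosh t)⁻¹ : ℝ)) : ℂ))
              * K h t a y w * Fsch h v hh w := by
    funext a
    have hfb : (fun b => fioSolution h v t a b)
        = fun b => (((((2 * π * h) ^ 2)⁻¹ : ℝ) : ℂ) * (((Real.cosh t)⁻¹ : ℝ) : ℂ))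
            * ∫ w : ℝ × ℝ, K h t a b w * Fsch h v hh w := by
      funext b
      rw [fio_eq h hh v t a b]
    rw [hfb]
    exact ((hasDerivAt_int_y h t a y hh (Fsch h v hh)).2.const_mul _).deriv
  obtain ⟨intX, hBx⟩ := hasDerivAt_int_x h t x y hh (Fsch h v hh)
  have hDxyderiv := (hBx.const_mul
    ((((((2 * π * h) ^ 2)⁻¹ : ℝ) : ℂ) * (((Real.cosh t)⁻¹ : ℝ) : ℂ)))).deriv
  rw [hfun1]
  erw [hDtderiv]
  rw [hfun2, hDxyderiv, fio_eq h hh v t x y]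
  -- abbreviations
  set F := Fsch h v hh with hF
  set c0 : ℂ := ((((2 * π * h) ^ 2)⁻¹ : ℝ) : ℂ) with hc0
  set J0 : ℂ := ∫ w : ℝ × ℝ, K h t x y w * F w with hJ0
  -- the three auxiliary integrals
  set PDt : ℂ := ∫ w : ℝ × ℝ,
    (((x*y - w.1*w.2) * ((Real.cosh t)⁻¹)^2
      - (x*w.1 + y*w.2) * (Real.tanh t * (Real.cosh t)⁻¹) : ℝ) : ℂ) * K h t x y w * F w
    with hPDt
  set PXY : ℂ := ∫ w : ℝ × ℝ,
    (((x * Real.tanh t + w.2 * (Real.cosh t)⁻¹ : ℝ) : ℂ)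
      * ((y * Real.tanh t + w.1 * (Real.cosh t)⁻¹ : ℝ) : ℂ)) * K h t x y w * F w with hPXY
  have intDt : Integrable (fun w : ℝ × ℝ =>
      (((x*y - w.1*w.2) * ((Real.cosh t)⁻¹)^2
        - (x*w.1 + y*w.2) * (Real.tanh t * (Real.cosh t)⁻¹) : ℝ) : ℂ) * K h t x y w * F w) := by
    have := intT.const_mul ((h:ℂ) / Complex.I)
    refine this.congr (Filter.Eventually.of_forall fun w => ?_)
    beta_reduce
    have hone : (h:ℂ)/Complex.I * (Complex.I/(h:ℂ)) = 1 := by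
      field_simp
    linear_combination ((((x*y - w.1*w.2) * ((Real.cosh t)⁻¹)^2
      - (x*w.1 + y*w.2) * (Real.tanh t * (Real.cosh t)⁻¹) : ℝ) : ℂ)
        * K h t x y w * Fsch h v hh w) * hone
  have intXY : Integrable (fun w : ℝ × ℝ =>
      (((x * Real.tanh t + w.2 * (Real.cosh t)⁻¹ : ℝ) : ℂ)
        * ((y * Real.tanh t + w.1 * (Real.cosh t)⁻¹ : ℝ) : ℂ)) * K h t x y w * F w) := by
    refine int_mul_of_poly_bound hh F
      (fun w => (((x * Real.tanh t + w.2 * (Real.cosh t)⁻¹ : ℝ) : ℂ)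
        * ((y * Real.tanh t + w.1 * (Real.cosh t)⁻¹ : ℝ) : ℂ)) * K h t x y w)
      (by
        refine Continuous.mul ?_ (continuous_K h t x y)
        fun_prop)
      (|x| * |y|) (|x| + |y|) 1 (fun w => ?_)
    rw [norm_mul, norm_K hh, mul_one, norm_mul, Complex.norm_real, Complex.norm_real,
      Real.norm_eq_abs, Real.norm_eq_abs]
    have hw1 : |w.1| ≤ ‖w‖ := by rw [← Real.norm_eq_abs]; exact norm_fst_le w
    have hw2 : |w.2| ≤ ‖w‖ := by rw [← Real.norm_eq_abs]; exact norm_snd_le w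
    have hwn : (0:ℝ) ≤ ‖w‖ := norm_nonneg w
    have h2 : |x * Real.tanh t + w.2 * (Real.cosh t)⁻¹| ≤ |x| + ‖w‖ :=
      le_trans (abs_lin_le t x w.2) (by linarith)
    have h3 : |y * Real.tanh t + w.1 * (Real.cosh t)⁻¹| ≤ |y| + ‖w‖ :=
      le_trans (abs_lin_le t y w.1) (by linarith)
    calc |x * Real.tanh t + w.2 * (Real.cosh t)⁻¹| * |y * Real.tanh t + w.1 * (Real.cosh t)⁻¹|
        ≤ (|x| + ‖w‖) * (|y| + ‖w‖) :=
          mul_le_mul h2 h3 (abs_nonneg _) (by positivity)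
      _ = |x| * |y| + (|x| + |y|) * ‖w‖ + 1 * ‖w‖^2 := by ring
  -- express the two derivative integrals
  have e1 : (∫ w : ℝ × ℝ,
      Complex.I / (h:ℂ) * (((x*y - w.1*w.2) * ((Real.cosh t)⁻¹)^2
        - (x*w.1 + y*w.2) * (Real.tanh t * (Real.cosh t)⁻¹) : ℝ) : ℂ) * K h t x y w * F w)
      = (Complex.I / (h:ℂ)) * PDt := by
    rw [hPDt, ← MeasureTheory.integral_const_mul]
    refine integral_congr_ae (Filter.Eventually.of_forall fun w => ?_)
    beta_reduce
    ring
  have e2 : (∫ w : ℝ × ℝ,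
      (Complex.I / (h:ℂ) * ((Real.tanh t : ℝ) : ℂ) * K h t x y w
        + Complex.I / (h:ℂ) * (((x * Real.tanh t + w.2 * (Real.cosh t)⁻¹ : ℝ)) : ℂ)
          * (Complex.I / (h:ℂ) * (((y * Real.tanh t + w.1 * (Real.cosh t)⁻¹ : ℝ)) : ℂ)
            * K h t x y w)) * F w)
      = (Complex.I / (h:ℂ) * ((Real.tanh t : ℝ) : ℂ)) * J0
        + (Complex.I / (h:ℂ) * (Complex.I / (h:ℂ))) * PXY := by
    have hptw : ∀ w : ℝ × ℝ,
        (Complex.I / (h:ℂ) * ((Real.tanh t : ℝ) : ℂ) * K h t x y w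
          + Complex.I / (h:ℂ) * (((x * Real.tanh t + w.2 * (Real.cosh t)⁻¹ : ℝ)) : ℂ)
            * (Complex.I / (h:ℂ) * (((y * Real.tanh t + w.1 * (Real.cosh t)⁻¹ : ℝ)) : ℂ)
              * K h t x y w)) * F w
        = (Complex.I / (h:ℂ) * ((Real.tanh t : ℝ) : ℂ)) * (K h t x y w * F w)
          + (Complex.I / (h:ℂ) * (Complex.I / (h:ℂ)))
            * ((((x * Real.tanh t + w.2 * (Real.cosh t)⁻¹ : ℝ) : ℂ)
              * ((y * Real.tanh t + w.1 * (Real.cosh t)⁻¹ : ℝ) : ℂ)) * K h t x y w * F w) :=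
      fun w => by ring
    rw [integral_congr_ae (Filter.Eventually.of_forall fun w => hptw w)]
    rw [integral_add ((int_KF h t x y (hh := hh) F).const_mul _) (intXY.const_mul _),
      MeasureTheory.integral_const_mul, MeasureTheory.integral_const_mul]
  rw [e1, e2]
  -- key pointwise identity
  have key : PDt + PXY = ((x:ℂ) * (y:ℂ)) * J0 := by
    rw [hPDt, hPXY, hJ0, ← integral_add intDt intXY, ← MeasureTheory.integral_const_mul]
    refine integral_congr_ae (Filter.Eventually.of_forall fun w => ?_)
    beta_reduce
    have hreal : ((x*y - w.1*w.2) * ((Real.cosh t)⁻¹)^2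
        - (x*w.1 + y*w.2) * (Real.tanh t * (Real.cosh t)⁻¹))
        + (x * Real.tanh t + w.2 * (Real.cosh t)⁻¹) * (y * Real.tanh t + w.1 * (Real.cosh t)⁻¹)
        = x * y := by
      linear_combination (x*y) * (tanh_sq_add_sech_sq t)
    have hcast : (((x*y - w.1*w.2) * ((Real.cosh t)⁻¹)^2
        - (x*w.1 + y*w.2) * (Real.tanh t * (Real.cosh t)⁻¹) : ℝ) : ℂ)
        + ((x * Real.tanh t + w.2 * (Real.cosh t)⁻¹ : ℝ) : ℂ)
          * ((y * Real.tanh t + w.1 * (Real.cosh t)⁻¹ : ℝ) : ℂ)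
        = (x:ℂ) * (y:ℂ) := by
      rw [← Complex.ofReal_mul, ← Complex.ofReal_mul, ← Complex.ofReal_add, hreal,
        Complex.ofReal_mul]
    linear_combination (K h t x y w * F w) * hcast
  have hPXYeq : PXY = ((x:ℂ) * (y:ℂ)) * J0 - PDt := by
    rw [← key]; ring
  rw [hPXYeq]
  rw [show ((-(Real.tanh t * (Real.cosh t)⁻¹) : ℝ) : ℂ)
      = -(((Real.tanh t : ℝ) : ℂ) * (((Real.cosh t)⁻¹ : ℝ) : ℂ)) from by push_cast; ring]
  rw [show ((x * y : ℝ) : ℂ) = (x:ℂ) * (y:ℂ) from by push_cast; ring]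
  exact scalar_final _ _ _ _ _ _ _ _ hhc
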